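/- Let a and b be binary relations on a set such that both a and b are well-founded (i.e., admit no infinite sequences of steps) and the composition a;b is contained in b*;a (where b* is the reflexive-transitive closure of b). Then the union a ∪ b is well-founded. -/

import Mathlib

/-- A relation is well-founded in the rewriting sense if it admits no infinite
sequence of steps `x₀ r x₁ r x₂ r ⋯`. -/
def NoInfSeq {α : Type*} (r : α → α → Prop) : Prop :=
  ¬ ∃ f : ℕ → α, ∀ n, r (f n) (f (n + 1))

private lemma wf_of_noInfSeq {α : Type*} {r : α → α → Prop} (h : NoInfSeq r) :
    WellFounded (flip r) := by
  by_contra hwf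
  have hx : ∃ x, ¬ Acc (flip r) x := by
    by_contra h'
    push_neg at h'
    exact hwf ⟨h'⟩
  obtain ⟨x0, hx0⟩ := hx
  choose g hg1 hg2 using fun x : {x : α // ¬ Acc (flip r) x} =>
    exists_not_acc_lt_of_not_acc x.2
  let G : {x : α // ¬ Acc (flip r) x} → {x : α // ¬ Acc (flip r) x} := fun x => ⟨g x, hg1 x⟩
  refine h ⟨fun n => (G^[n] ⟨x0, hx0⟩).1, fun n => ?_⟩
  show r ((G^[n] ⟨x0, hx0⟩) : α) ((G^[n + 1] ⟨x0, hx0⟩) : α)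
  rw [Function.iterate_succ', Function.comp_apply]
  exact hg2 _

private lemma acc_of_reach {α : Type*} {c : α → α → Prop} {x y : α}
    (hx : Acc (flip c) x) (hxy : Relation.ReflTransGen c x y) : Acc (flip c) y := by
  induction hxy with
  | refl => exact hx
  | tail _ h ih => exact ih.inv h

theorem union_wellFounded_of_comp_subset {α : Type*} (a b : α → α → Prop)
    (ha : NoInfSeq a) (hb : NoInfSeq b)
    (hcomp : ∀ x y z, a x y → b y z → ∃ w, Relation.ReflTransGen b x w ∧ a w z) :
    NoInfSeq (fun x y => a x y ∨ b x y) := by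
  set c : α → α → Prop := fun x y => a x y ∨ b x y with hc
  have hwa := wf_of_noInfSeq ha
  have hwb := wf_of_noInfSeq hb
  -- main lemma: if all b-successors of x are Acc (flip c), then so is x
  have main : ∀ x : α, (∀ u, b x u → Acc (flip c) u) → Acc (flip c) x := by
    intro x
    induction hwa.apply x with
    | intro x _ IH =>
      intro Hb
      -- b-successors of a-successors of x are accessible
      have T : ∀ z, a x z → ∀ u, b z u → Acc (flip c) u := by
        intro z
        induction hwb.apply z with
        | intro z _ IHb =>
          intro hz u hzu
          obtain ⟨w, hxw, hwu⟩ := hcomp x z u hz hzu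
          rcases hxw.cases_head with rfl | ⟨w₁, hxw₁, hw₁w⟩
          · -- w = x, so a x u
            exact IH u hwu (IHb u hzu hwu)
          · -- x b w₁ b* w a u
            refine acc_of_reach (Hb w₁ hxw₁) ?_
            refine Relation.ReflTransGen.tail ?_ (Or.inl hwu)
            exact Relation.ReflTransGen.mono (fun p q h => Or.inr h) _ _ hw₁w
      constructor
      intro y hy
      rcases hy with hay | hby
      · exact IH y hay (T y hay)
      · exact Hb y hby
  have hwc : WellFounded (flip c) := by
    constructor
    intro x
    induction hwb.apply x with
    | intro x _ IHb => exact main x IHb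
  intro ⟨f, hf⟩
  have : ∀ x, Acc (flip c) x → ∀ n, f n = x → False := by
    intro x hx
    induction hx with
    | intro x _ IH =>
      rintro n rfl
      exact IH (f (n + 1)) (hf n) (n + 1) rfl
  exact this (f 0) (hwc.apply _) 0 rfl
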